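/- For fixed σ > 0 and 0 < k < 1/3, the map ς ↦ q(ς) = (ς³ + ς² - σ)/(k·ς²) restricted to (-(2σ)^(1/3), 0) is a bijection onto (-∞, (1/k)·(1 - 3·(σ/4)^(1/3))). -/

import Mathlib

open Filter Set

theorem stmt_11 (k σ : ℝ) (hk : 0 < k) (hk' : k < 1/3) (hσ : 0 < σ) :
    Set.BijOn (fun ς : ℝ => (ς^3 + ς^2 - σ) / (k * ς^2))
      (Set.Ioo (-(2*σ) ^ ((1:ℝ)/3)) 0)
      (Set.Iio ((1/k) * (1 - 3 * (σ/4) ^ ((1:ℝ)/3)))) := by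
  have h2σ : (0:ℝ) < 2*σ := by linarith
  set f : ℝ → ℝ := fun ς : ℝ => (ς^3 + ς^2 - σ) / (k * ς^2) with hf
  set c : ℝ := (2*σ) ^ ((1:ℝ)/3) with hc
  set d : ℝ := (σ/4) ^ ((1:ℝ)/3) with hd
  have hc0 : 0 < c := Real.rpow_pos_of_pos h2σ _
  have hd0 : 0 < d := Real.rpow_pos_of_pos (by positivity) _
  have hc3 : c ^ 3 = 2*σ := by
    rw [hc, show (1:ℝ)/3 = ((3:ℕ):ℝ)⁻¹ by norm_num]
    exact Real.rpow_inv_natCast_pow h2σ.le (by norm_num)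
  have hd3 : d ^ 3 = σ/4 := by
    rw [hd, show (1:ℝ)/3 = ((3:ℕ):ℝ)⁻¹ by norm_num]
    exact Real.rpow_inv_natCast_pow (by positivity) (by norm_num)
  -- σ = d * c^2
  have hσdc : σ = d * c^2 := by
    have h1 : σ ^ 3 = (d * c^2)^3 := by
      have : (d*c^2)^3 = d^3 * (c^3)^2 := by ring
      rw [this, hc3, hd3]; ring
    nlinarith [sq_nonneg (σ - d*c^2), sq_nonneg (σ + d*c^2), mul_pos hd0 (pow_pos hc0 2),
      mul_pos (mul_pos hd0 (pow_pos hc0 2)) hσ]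
  have hLval : f (-c) = (1/k) * (1 - 3*d) := by
    have hnum : ((-c)^3 + (-c)^2 - σ) = (1 - 3*d) * c^2 := by
      linear_combination (-1:ℝ)*hc3 - 3*hσdc
    have hden : k * (-c)^2 = k * c^2 := by ring
    rw [hf]
    simp only
    rw [hnum, hden]
    field_simp
  -- continuity away from 0
  have hcont : ContinuousOn f (Set.Ico (-c) 0) := by
    apply ContinuousOn.div
    · fun_prop
    · fun_prop
    · intro x hx
      have hx0 : x ≠ 0 := hx.2.ne
      exact mul_ne_zero hk.ne' (pow_ne_zero 2 hx0)
  -- strict antitonicity on Ico (-c) 0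
  have hanti : StrictAntiOn f (Set.Ico (-c) 0) := by
    apply strictAntiOn_of_deriv_neg (convex_Ico _ _) hcont
    intro x hx
    rw [interior_Ico] at hx
    have hx0 : x < 0 := hx.2
    have hxc : -c < x := hx.1
    have hx2 : (0:ℝ) < x^2 := by nlinarith
    have hx3 : 0 < x^3 + 2*σ := by
      have h1 : 0 < x + c := by linarith
      have h2 : 0 < x^2 - x*c + c^2 := by nlinarith [sq_nonneg (2*x - c), sq_nonneg c]
      nlinarith [mul_pos h1 h2]
    have hg : HasDerivAt (fun ς : ℝ => ς^3 + ς^2 - σ) (3*x^2 + 2*x) x := by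
      have := (((hasDerivAt_pow 3 x).add (hasDerivAt_pow 2 x)).sub_const σ)
      refine this.congr_deriv ?_
      push_cast; ring
    have hh : HasDerivAt (fun ς : ℝ => k * ς^2) (k * (2*x)) x := by
      have := (hasDerivAt_pow 2 x).const_mul k
      refine this.congr_deriv ?_
      push_cast; ring
    have hne : k * x^2 ≠ 0 := by positivity
    have hD : HasDerivAt f (((3*x^2 + 2*x) * (k*x^2) - (x^3+x^2-σ) * (k*(2*x))) / (k*x^2)^2) x :=
      hg.div hh hne
    rw [hD.deriv]
    apply div_neg_of_neg_of_pos
    · nlinarith [mul_pos hk (mul_pos (neg_pos.mpr hx0) hx3)]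
    · positivity
  -- tendsto atBot near 0 from the left
  have htend : Tendsto f (nhdsWithin 0 (Set.Iio (0:ℝ))) atBot := by
    have h1 : Tendsto (fun x : ℝ => x^3 + x^2 - σ) (nhdsWithin 0 (Set.Iio 0)) (nhds (-σ)) := by
      have hccc : Continuous (fun x : ℝ => x^3 + x^2 - σ) := by fun_prop
      have := tendsto_nhdsWithin_of_tendsto_nhds (s := Set.Iio (0:ℝ)) (hccc.tendsto 0)
      simpa using this
    have h2 : Tendsto (fun x : ℝ => k * x^2) (nhdsWithin 0 (Set.Iio 0)) (nhdsWithin 0 (Set.Ioi 0)) := by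
      rw [tendsto_nhdsWithin_iff]
      constructor
      · have hccc : Continuous (fun x : ℝ => k * x^2) := by fun_prop
        have := tendsto_nhdsWithin_of_tendsto_nhds (s := Set.Iio (0:ℝ)) (hccc.tendsto 0)
        simpa using this
      · filter_upwards [self_mem_nhdsWithin] with x hx
        have hx0 : x < 0 := hx
        have : (0:ℝ) < x^2 := by nlinarith
        exact mul_pos hk this
    have h3 : Tendsto (fun x : ℝ => (k * x^2)⁻¹) (nhdsWithin 0 (Set.Iio 0)) atTop :=
      tendsto_inv_nhdsGT_zero.comp h2
    have h4 := h1.neg_mul_atTop (show -σ < 0 by linarith) h3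
    refine h4.congr fun x => ?_
    exact (div_eq_mul_inv _ _).symm
  -- MapsTo
  have hmaps : Set.MapsTo f (Set.Ioo (-c) 0) (Set.Iio ((1/k) * (1 - 3*d))) := by
    intro x hx
    have hmem : x ∈ Set.Ico (-c) 0 := ⟨hx.1.le, hx.2⟩
    have hmc : -c ∈ Set.Ico (-c) 0 := ⟨le_refl _, by linarith⟩
    have := hanti hmc hmem hx.1
    rw [hLval] at this
    exact this
  -- SurjOn
  have hsurj : Set.SurjOn f (Set.Ioo (-c) 0) (Set.Iio ((1/k) * (1 - 3*d))) := by
    intro y hy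
    have hyL : y < (1/k) * (1 - 3*d) := hy
    -- find b near 0 with f b < y
    have hev1 : ∀ᶠ x in nhdsWithin 0 (Set.Iio (0:ℝ)), f x < y :=
      htend.eventually (eventually_lt_atBot y)
    have hev2 : ∀ᶠ x in nhdsWithin 0 (Set.Iio (0:ℝ)), -c < x :=
      ((eventually_gt_nhds (show -c < 0 by linarith)).filter_mono nhdsWithin_le_nhds)
    have hev3 : ∀ᶠ x in nhdsWithin 0 (Set.Iio (0:ℝ)), x < 0 := self_mem_nhdsWithin
    have hnb : (nhdsWithin (0:ℝ) (Set.Iio 0)).NeBot := by infer_instance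
    obtain ⟨b, ⟨hfb, hbc⟩, hb0⟩ := ((hev1.and hev2).and hev3).exists
    have hab : -c ≤ b := hbc.le
    have hsub : Set.Icc (-c) b ⊆ Set.Ico (-c) 0 := fun t ht => ⟨ht.1, lt_of_le_of_lt ht.2 hb0⟩
    have hivt := intermediate_value_Icc' hab (hcont.mono hsub)
    have hy2 : y ∈ Set.Icc (f b) (f (-c)) := ⟨hfb.le, by rw [hLval]; exact hyL.le⟩
    obtain ⟨x, hx, hfx⟩ := hivt hy2
    refine ⟨x, ⟨?_, lt_of_le_of_lt hx.2 hb0⟩, hfx⟩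
    rcases eq_or_lt_of_le hx.1 with h | h
    · exfalso
      rw [← h, hLval] at hfx
      linarith [hfx, hyL]
    · exact h
  exact ⟨hmaps, (hanti.injOn).mono Set.Ioo_subset_Ico_self, hsurj⟩
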